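/- Let X be a probability space, n a positive integer, and f ∈ L²(X^n). Then f admits a generalized Walsh expansion f = Σ_{S ⊆ [n]} F_S, and this expansion is unique: any family (F_S)_{S ⊆ [n]} satisfying the two defining properties is given, for almost every y ∈ X^n, by F_S(y) = Σ_{T ⊆ S} (−1)^{|S∖T|} ∫ f(y_T, x_{[n]∖T}) dx_{[n]∖T}. -/

import Mathlib

open MeasureTheory Finset

section aux
variable {Ω : Type*} [MeasurableSpace Ω] {μ : Measure Ω} [IsProbabilityMeasure μ] {n : ℕ}

local notation "π" => Measure.pi fun _ : Fin n => μ

lemma mp_piecewise (T : Finset (Fin n)) :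
    MeasurePreserving (fun p : (Fin n → Ω) × (Fin n → Ω) => fun i => if i ∈ T then p.1 i else p.2 i)
      ((Measure.pi fun _ : Fin n => μ).prod (Measure.pi fun _ : Fin n => μ))
      (Measure.pi fun _ : Fin n => μ) := by
  have hm : Measurable (fun p : (Fin n → Ω) × (Fin n → Ω) => fun i => if i ∈ T then p.1 i else p.2 i) := by
    refine measurable_pi_lambda _ fun i => ?_
    by_cases h : i ∈ T <;> simp only [h, if_true, if_false]
    exacts [measurable_fst.eval, measurable_snd.eval]
  refine ⟨hm, ?_⟩
  refine (Measure.pi_eq fun s hs => ?_).symm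
  rw [Measure.map_apply hm (MeasurableSet.univ_pi hs)]
  have hpre : (fun p : (Fin n → Ω) × (Fin n → Ω) => fun i => if i ∈ T then p.1 i else p.2 i) ⁻¹'
      (Set.univ.pi s) =
      (Set.univ.pi fun i => if i ∈ T then s i else Set.univ) ×ˢ
      (Set.univ.pi fun i => if i ∈ T then Set.univ else s i) := by
    ext p
    simp only [Set.mem_preimage, Set.mem_pi, Set.mem_univ, forall_true_left, Set.mem_prod]
    constructor
    · intro h
      refine ⟨fun i => ?_, fun i => ?_⟩ <;> by_cases hi : i ∈ T <;>
        simp only [hi, if_true, if_false, Set.mem_univ] <;> first | trivial | (have := h i; simpa [hi] using this)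
    · rintro ⟨h1, h2⟩ i
      by_cases hi : i ∈ T
      · have := h1 i; simpa [hi] using this
      · have := h2 i; simpa [hi] using this
  rw [hpre, Measure.prod_prod, Measure.pi_pi, Measure.pi_pi, ← Finset.prod_mul_distrib]
  refine Finset.prod_congr rfl fun i _ => ?_
  by_cases hi : i ∈ T <;> simp [hi]


lemma mp_update (i : Fin n) :
    MeasurePreserving (fun p : Ω × (Fin n → Ω) => Function.update p.2 i p.1)
      (μ.prod (Measure.pi fun _ : Fin n => μ)) (Measure.pi fun _ : Fin n => μ) := by
  have hm : Measurable (fun p : Ω × (Fin n → Ω) => Function.update p.2 i p.1) :=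
    measurable_update'.comp (measurable_snd.prodMk measurable_fst)
  refine ⟨hm, ?_⟩
  refine (Measure.pi_eq fun s hs => ?_).symm
  rw [Measure.map_apply hm (MeasurableSet.univ_pi hs)]
  have hpre : (fun p : Ω × (Fin n → Ω) => Function.update p.2 i p.1) ⁻¹' (Set.univ.pi s) =
      (s i) ×ˢ (Set.univ.pi fun j => if j = i then Set.univ else s j) := by
    ext p
    simp only [Set.mem_preimage, Set.mem_pi, Set.mem_univ, forall_true_left, Set.mem_prod]
    constructor
    · intro h
      refine ⟨by simpa using h i, fun j => ?_⟩
      by_cases hj : j = i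
      · simp [hj]
      · simpa [hj, Function.update_apply] using h j
    · rintro ⟨h1, h2⟩ j
      by_cases hj : j = i
      · subst hj; simpa using h1
      · have := h2 j; simpa [hj, Function.update_apply] using this
  rw [hpre, Measure.prod_prod, Measure.pi_pi]
  have h1 : (∏ j, μ (if j = i then Set.univ else s j)) = ∏ j ∈ Finset.univ.erase i, μ (s j) := by
    rw [← Finset.mul_prod_erase Finset.univ _ (Finset.mem_univ i)]
    rw [if_pos rfl, measure_univ, one_mul]
    exact Finset.prod_congr rfl fun j hj => by rw [if_neg (Finset.ne_of_mem_erase hj)]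
  rw [h1, ← Finset.mul_prod_erase Finset.univ (fun j => μ (s j)) (Finset.mem_univ i)]


/-- The partial-integration (conditional-expectation-like) operator. -/
noncomputable def Ef (μ : Measure Ω) (T : Finset (Fin n)) (g : (Fin n → Ω) → ℂ)
    (y : Fin n → Ω) : ℂ :=
  ∫ x, g (fun i => if i ∈ T then y i else x i) ∂(Measure.pi fun _ : Fin n => μ)

lemma Ef_coords (T : Finset (Fin n)) (g : (Fin n → Ω) → ℂ) {y y' : Fin n → Ω}
    (h : ∀ i ∈ T, y i = y' i) : Ef μ T g y = Ef μ T g y' := by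
  unfold Ef
  congr 1
  funext x
  congr 1
  funext i
  by_cases hi : i ∈ T <;> simp [hi, h i]

lemma comp_aesm {g : (Fin n → Ω) → ℂ} (hg : AEStronglyMeasurable g π) (T : Finset (Fin n)) :
    AEStronglyMeasurable (fun p : (Fin n → Ω) × (Fin n → Ω) =>
      g (fun i => if i ∈ T then p.1 i else p.2 i)) ((Measure.pi fun _ : Fin n => μ).prod (Measure.pi fun _ : Fin n => μ)) :=
  by exact hg.comp_quasiMeasurePreserving (mp_piecewise (μ := μ) T).quasiMeasurePreserving

lemma comp_int {g : (Fin n → Ω) → ℂ} (hg : Integrable g π) (T : Finset (Fin n)) :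
    Integrable (fun p : (Fin n → Ω) × (Fin n → Ω) =>
      g (fun i => if i ∈ T then p.1 i else p.2 i)) ((Measure.pi fun _ : Fin n => μ).prod (Measure.pi fun _ : Fin n => μ)) :=
  by simpa [Function.comp_def] using ((mp_piecewise (μ := μ) T).integrable_comp hg.1).mpr hg

lemma Ef_aesm {g : (Fin n → Ω) → ℂ} (hg : AEStronglyMeasurable g π) (T : Finset (Fin n)) :
    AEStronglyMeasurable (Ef μ T g) π :=
  (comp_aesm hg T).integral_prod_right'

lemma Ef_congr_ae {g g' : (Fin n → Ω) → ℂ} (hg : g =ᵐ[π] g') (T : Finset (Fin n)) :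
    Ef μ T g =ᵐ[π] Ef μ T g' := by
  have h := (mp_piecewise (μ := μ) T).quasiMeasurePreserving.ae hg
  filter_upwards [Measure.ae_ae_of_ae_prod h] with y hy
  exact integral_congr_ae hy

lemma Ef_univ (g : (Fin n → Ω) → ℂ) (y : Fin n → Ω) : Ef μ Finset.univ g y = g y := by
  unfold Ef
  simp [measure_univ]


lemma aesm_section {α β E : Type*} [MeasurableSpace α] [MeasurableSpace β] [TopologicalSpace E]
    {ν₁ : Measure α} {ν₂ : Measure β} [SFinite ν₂] {h : α × β → E}
    (hh : AEStronglyMeasurable h (ν₁.prod ν₂)) :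
    ∀ᵐ x ∂ν₁, AEStronglyMeasurable (fun y => h (x, y)) ν₂ := by
  filter_upwards [Measure.ae_ae_of_ae_prod hh.ae_eq_mk] with x hx
  exact ((hh.stronglyMeasurable_mk.comp_measurable
    measurable_prodMk_left).aestronglyMeasurable).congr (hx.mono fun y hy => hy.symm)

lemma sq_integral_le {α : Type*} [MeasurableSpace α] {ν : Measure α} [IsProbabilityMeasure ν]
    {g : α → ℝ} (hg : MemLp g 2 ν) : (∫ x, g x ∂ν) ^ 2 ≤ ∫ x, g x ^ 2 ∂ν := by
  have h := ProbabilityTheory.variance_nonneg g ν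
  rw [ProbabilityTheory.variance_eq_sub hg] at h
  have h2 : ∫ x, (g ^ 2) x ∂ν = ∫ x, g x ^ 2 ∂ν := by simp only [Pi.pow_apply]
  rw [h2] at h
  linarith

lemma Ef_memLp {g : (Fin n → Ω) → ℂ} (hg : MemLp g 2 π) (T : Finset (Fin n)) :
    MemLp (Ef μ T g) 2 π := by
  have hsm : AEStronglyMeasurable (Ef μ T g) π := Ef_aesm hg.1 T
  rw [memLp_two_iff_integrable_sq_norm hsm]
  have hN : Integrable (fun y => ‖g y‖ ^ 2) π := (memLp_two_iff_integrable_sq_norm hg.1).mp hg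
  have hNc : Integrable (fun p : (Fin n → Ω) × (Fin n → Ω) =>
      ‖g (fun i => if i ∈ T then p.1 i else p.2 i)‖ ^ 2)
      ((Measure.pi fun _ : Fin n => μ).prod (Measure.pi fun _ : Fin n => μ)) := by
    simpa [Function.comp_def] using ((mp_piecewise (μ := μ) T).integrable_comp hN.1).mpr hN
  have hmarg : Integrable (fun y => ∫ x, ‖g (fun i => if i ∈ T then y i else x i)‖ ^ 2
      ∂(Measure.pi fun _ : Fin n => μ)) π := hNc.integral_prod_left
  refine hmarg.mono' (hsm.norm.pow 2) ?_
  filter_upwards [hNc.prod_right_ae, aesm_section (comp_aesm hg.1 T)] with y hint hsec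
  have key : MemLp (fun x : Fin n → Ω => ‖g (fun i => if i ∈ T then y i else x i)‖) 2 π := by
    refine (memLp_two_iff_integrable_sq hsec.norm).mpr ?_
    exact hint
  have hcs := sq_integral_le key
  have hb : ‖Ef μ T g y‖ ≤ ∫ x, ‖g (fun i => if i ∈ T then y i else x i)‖
      ∂(Measure.pi fun _ : Fin n => μ) := norm_integral_le_integral_norm _
  calc ‖‖Ef μ T g y‖ ^ 2‖ = ‖Ef μ T g y‖ ^ 2 := by
        rw [Real.norm_of_nonneg (by positivity)]
    _ ≤ (∫ x, ‖g (fun i => if i ∈ T then y i else x i)‖ ∂(Measure.pi fun _ : Fin n => μ)) ^ 2 :=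
        pow_le_pow_left₀ (norm_nonneg _) hb 2
    _ ≤ ∫ x, ‖g (fun i => if i ∈ T then y i else x i)‖ ^ 2 ∂(Measure.pi fun _ : Fin n => μ) := hcs

lemma Ef_const {F : (Fin n → Ω) → ℂ} {S T : Finset (Fin n)}
    (hc : ∀ x y : Fin n → Ω, (∀ i ∈ S, x i = y i) → F x = F y) (hST : S ⊆ T) (y : Fin n → Ω) :
    Ef μ T F y = F y := by
  unfold Ef
  have h : ∀ x : Fin n → Ω, F (fun i => if i ∈ T then y i else x i) = F y := fun x =>
    hc _ _ (fun i hiS => by simp [hST hiS])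
  simp_rw [h]
  simp [measure_univ]

lemma Ef_update_not_mem {g : (Fin n → Ω) → ℂ} {T : Finset (Fin n)} {i : Fin n} (hi : i ∉ T)
    (x : Fin n → Ω) (t : Ω) : Ef μ T g (Function.update x i t) = Ef μ T g x :=
  Ef_coords T g fun j hj => by
    rw [Function.update_apply, if_neg (fun h : j = i => hi (h ▸ hj))]

lemma Ef_update {g : (Fin n → Ω) → ℂ} (hg : Integrable g π) {T : Finset (Fin n)} {i : Fin n}
    (hi : i ∈ T) :
    ∀ᵐ x ∂π, Integrable (fun t => Ef μ T g (Function.update x i t)) μ ∧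
      ∫ t, Ef μ T g (Function.update x i t) ∂μ = Ef μ (T.erase i) g x := by
  filter_upwards [(comp_int hg (T.erase i)).prod_right_ae] with x hx
  set H : (Fin n → Ω) → ℂ := fun w => g (fun j => if j ∈ T.erase i then x j else w j) with hH
  have hid : ∀ (t : Ω) (z : Fin n → Ω),
      (fun j => if j ∈ T then Function.update x i t j else z j) =
      (fun j => if j ∈ T.erase i then x j else Function.update z i t j) := by
    intro t z; funext j
    rcases eq_or_ne j i with rfl | hj
    · simp [hi, Finset.mem_erase]
    · by_cases hjT : j ∈ T <;> simp [Function.update_apply, hj, hjT, Finset.mem_erase]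
  have hcomp : Integrable (fun p : Ω × (Fin n → Ω) => H (Function.update p.2 i p.1))
      (μ.prod (Measure.pi fun _ : Fin n => μ)) := by
    simpa [Function.comp_def] using ((mp_update (μ := μ) i).integrable_comp hx.1).mpr hx
  have hEf : ∀ t : Ω, Ef μ T g (Function.update x i t) =
      ∫ z, H (Function.update z i t) ∂(Measure.pi fun _ : Fin n => μ) := by
    intro t; unfold Ef
    exact integral_congr_ae (Filter.Eventually.of_forall fun z => congrArg g (hid t z))
  constructor
  · exact hcomp.integral_prod_left.congr
      (Filter.Eventually.of_forall fun t => (hEf t).symm)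
  · calc ∫ t, Ef μ T g (Function.update x i t) ∂μ
        = ∫ t, ∫ z, H (Function.update z i t) ∂(Measure.pi fun _ : Fin n => μ) ∂μ :=
          integral_congr_ae (Filter.Eventually.of_forall fun t => hEf t)
      _ = ∫ p, H (Function.update p.2 i p.1) ∂(μ.prod (Measure.pi fun _ : Fin n => μ)) :=
          (MeasureTheory.integral_prod _ hcomp).symm
      _ = ∫ w, H w ∂(Measure.pi fun _ : Fin n => μ) := by
          have h3 := integral_map (f := H)
            (mp_update (μ := μ) i).measurable.aemeasurable
            ((mp_update (μ := μ) i).map_eq.symm ▸ hx.1)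
          rw [(mp_update (μ := μ) i).map_eq] at h3
          exact h3.symm
      _ = Ef μ (T.erase i) g x := rfl

lemma Ef_zero {F : (Fin n → Ω) → ℂ} (hF : Integrable F π) {T : Finset (Fin n)} {i : Fin n}
    (hi : i ∉ T)
    (hkill : ∀ᵐ x ∂π, ∫ t, F (Function.update x i t) ∂μ = 0) :
    ∀ᵐ y ∂π, Ef μ T F y = 0 := by
  have hkill' : ∀ᵐ p ∂((Measure.pi fun _ : Fin n => μ).prod (Measure.pi fun _ : Fin n => μ)),
      ∫ t, F (Function.update (fun j => if j ∈ T then p.1 j else p.2 j) i t) ∂μ = 0 :=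
    (mp_piecewise (μ := μ) T).quasiMeasurePreserving.ae hkill
  filter_upwards [(comp_int hF T).prod_right_ae, Measure.ae_ae_of_ae_prod hkill'] with y hy hky
  set H : (Fin n → Ω) → ℂ := fun z => F (fun j => if j ∈ T then y j else z j) with hH
  have hid : ∀ (t : Ω) (z : Fin n → Ω), H (Function.update z i t) =
      F (Function.update (fun j => if j ∈ T then y j else z j) i t) := by
    intro t z; apply congrArg F; funext j
    rcases eq_or_ne j i with rfl | hj
    · simp [hi]
    · by_cases hjT : j ∈ T <;> simp [Function.update_apply, hj, hjT]
  have hcomp : Integrable (fun p : Ω × (Fin n → Ω) => H (Function.update p.2 i p.1))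
      (μ.prod (Measure.pi fun _ : Fin n => μ)) := by
    simpa [Function.comp_def] using ((mp_update (μ := μ) i).integrable_comp hy.1).mpr hy
  have h1 : Ef μ T F y = ∫ z, ∫ t, H (Function.update z i t) ∂μ
      ∂(Measure.pi fun _ : Fin n => μ) := by
    rw [← MeasureTheory.integral_prod_symm _ hcomp]
    show ∫ z, H z ∂(Measure.pi fun _ : Fin n => μ) = _
    have h3 := integral_map (f := H)
      (mp_update (μ := μ) i).measurable.aemeasurable
      ((mp_update (μ := μ) i).map_eq.symm ▸ hy.1)
    rw [(mp_update (μ := μ) i).map_eq] at h3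
    exact h3
  rw [h1]
  have h2 : (fun z => ∫ t, H (Function.update z i t) ∂μ) =ᵐ[Measure.pi fun _ : Fin n => μ]
      (fun _ => (0 : ℂ)) := by
    filter_upwards [hky] with z hz
    calc ∫ t, H (Function.update z i t) ∂μ
        = ∫ t, F (Function.update (fun j => if j ∈ T then y j else z j) i t) ∂μ :=
          integral_congr_ae (Filter.Eventually.of_forall fun t => hid t z)
      _ = 0 := hz
  rw [integral_congr_ae h2, integral_zero]

lemma Ef_sum {s : Finset (Finset (Fin n))} {F : Finset (Fin n) → (Fin n → Ω) → ℂ}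
    (hF : ∀ S ∈ s, Integrable (F S) π) (T : Finset (Fin n)) :
    ∀ᵐ y ∂π, Ef μ T (fun v => ∑ S ∈ s, F S v) y = ∑ S ∈ s, Ef μ T (F S) y := by
  have h : ∀ᵐ y ∂π, ∀ S ∈ s, Integrable
      (fun z => F S (fun i => if i ∈ T then y i else z i)) π := by
    rw [Finset.eventually_all]
    intro S hS
    exact (comp_int (hF S hS) T).prod_right_ae
  filter_upwards [h] with y hy
  unfold Ef
  exact integral_finset_sum s (fun S hS => hy S hS)

end aux

section comb
variable {ι : Type*} [DecidableEq ι]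

lemma sum_powerset_neg_one_pow_card_C (s : Finset ι) :
    ∑ U ∈ s.powerset, (-1 : ℂ) ^ U.card = if s = ∅ then 1 else 0 := by
  have h := Finset.sum_powerset_neg_one_pow_card (α := ι) (x := s)
  have h2 := congrArg (fun z : ℤ => (z : ℂ)) h
  push_cast at h2
  simpa [apply_ite (fun z : ℤ => (z : ℂ))] using h2

lemma sum_sign_sub {A B : Finset ι} (hAB : A ⊆ B) :
    ∑ T ∈ B.powerset.filter (fun T => A ⊆ T), (-1 : ℂ) ^ (T.card - A.card) =
      if A = B then 1 else 0 := by
  have hbij : ∑ T ∈ B.powerset.filter (fun T => A ⊆ T), (-1 : ℂ) ^ (T.card - A.card)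
      = ∑ U ∈ (B \ A).powerset, (-1 : ℂ) ^ U.card := by
    refine Finset.sum_nbij' (fun T => T \ A) (fun U => U ∪ A) ?_ ?_ ?_ ?_ ?_
    · intro T hT
      simp only [Finset.mem_filter, Finset.mem_powerset] at hT ⊢
      exact Finset.sdiff_subset_sdiff hT.1 (Finset.Subset.refl A)
    · intro U hU
      simp only [Finset.mem_filter, Finset.mem_powerset] at hU ⊢
      constructor
      · exact Finset.union_subset (hU.trans (Finset.sdiff_subset)) hAB
      · exact Finset.subset_union_right
    · intro T hT
      simp only [Finset.mem_filter, Finset.mem_powerset] at hT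
      exact Finset.sdiff_union_of_subset hT.2
    · intro U hU
      simp only [Finset.mem_powerset] at hU
      have hdisj : Disjoint U A := Finset.disjoint_left.mpr fun a haU haA =>
        (Finset.mem_sdiff.mp (hU haU)).2 haA
      show (U ∪ A) \ A = U
      rw [Finset.union_sdiff_distrib, Finset.sdiff_eq_self_of_disjoint hdisj,
        Finset.sdiff_self, Finset.union_empty]
    · intro T hT
      simp only [Finset.mem_filter, Finset.mem_powerset] at hT
      rw [Finset.card_sdiff_of_subset hT.2]
  rw [hbij, sum_powerset_neg_one_pow_card_C]
  by_cases h : A = B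
  · subst h; simp
  · rw [if_neg, if_neg h]
    intro hc
    exact h (Finset.Subset.antisymm hAB (Finset.sdiff_eq_empty_iff_subset.mp hc))

lemma sum_sign_sub' {A B : Finset ι} (hAB : A ⊆ B) :
    ∑ T ∈ B.powerset.filter (fun T => A ⊆ T), (-1 : ℂ) ^ (B.card - T.card) =
      if A = B then 1 else 0 := by
  have key : ∀ T ∈ B.powerset.filter (fun T => A ⊆ T),
      (-1 : ℂ) ^ (B.card - T.card) = (-1) ^ (B.card - A.card) * (-1) ^ (T.card - A.card) := by
    intro T hT
    simp only [Finset.mem_filter, Finset.mem_powerset] at hT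
    have hc1 := Finset.card_le_card hT.1
    have hc2 := Finset.card_le_card hT.2
    have h1 : (B.card - T.card) + (T.card - A.card) = B.card - A.card := by omega
    calc (-1 : ℂ) ^ (B.card - T.card)
        = (-1) ^ (B.card - T.card) * ((-1) ^ (T.card - A.card) * (-1) ^ (T.card - A.card)) := by
          rw [← mul_pow]; norm_num
      _ = (-1) ^ (B.card - A.card) * (-1) ^ (T.card - A.card) := by
          rw [← mul_assoc, ← pow_add, h1]
  rw [Finset.sum_congr rfl key, ← Finset.mul_sum, sum_sign_sub hAB]
  by_cases h : A = B
  · subst h; simp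
  · simp [h]

lemma powerset_double_sum (S : Finset ι) (g : Finset ι → Finset ι → ℂ) :
    ∑ T ∈ S.powerset, ∑ U ∈ T.powerset, g T U =
      ∑ U ∈ S.powerset, ∑ T ∈ S.powerset.filter (fun T => U ⊆ T), g T U := by
  have h1 : ∀ T ∈ S.powerset, ∑ U ∈ T.powerset, g T U
      = ∑ U ∈ S.powerset, if U ⊆ T then g T U else 0 := by
    intro T hT
    rw [Finset.mem_powerset] at hT
    rw [← Finset.sum_filter]
    congr 1
    ext U
    simp only [Finset.mem_powerset, Finset.mem_filter]
    constructor
    · intro h; exact ⟨h.trans hT, h⟩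
    · exact fun h => h.2
  rw [Finset.sum_congr rfl h1, Finset.sum_comm]
  exact Finset.sum_congr rfl fun U _ => (Finset.sum_filter _ _).symm

end comb

theorem walsh_expansion_exists_unique {Ω : Type*} [MeasurableSpace Ω] (μ : Measure Ω)
    [IsProbabilityMeasure μ] (n : ℕ) (hn : 0 < n) (f : (Fin n → Ω) → ℂ)
    (hf : MemLp f 2 (Measure.pi fun _ : Fin n => μ)) :
    (∃ F : Finset (Fin n) → ((Fin n → Ω) → ℂ),
      (∀ S, MemLp (F S) 2 (Measure.pi fun _ : Fin n => μ)) ∧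
      (∀ S : Finset (Fin n), ∀ x y : Fin n → Ω, (∀ i ∈ S, x i = y i) → F S x = F S y) ∧
      (∀ S : Finset (Fin n), ∀ i ∈ S, ∀ᵐ x ∂(Measure.pi fun _ : Fin n => μ),
        ∫ t, F S (Function.update x i t) ∂μ = 0) ∧
      (∀ᵐ x ∂(Measure.pi fun _ : Fin n => μ), f x = ∑ S : Finset (Fin n), F S x)) ∧
    (∀ F : Finset (Fin n) → ((Fin n → Ω) → ℂ),
      (∀ S, MemLp (F S) 2 (Measure.pi fun _ : Fin n => μ)) →
      (∀ S : Finset (Fin n), ∀ x y : Fin n → Ω, (∀ i ∈ S, x i = y i) → F S x = F S y) →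
      (∀ S : Finset (Fin n), ∀ i ∈ S, ∀ᵐ x ∂(Measure.pi fun _ : Fin n => μ),
        ∫ t, F S (Function.update x i t) ∂μ = 0) →
      (∀ᵐ x ∂(Measure.pi fun _ : Fin n => μ), f x = ∑ S : Finset (Fin n), F S x) →
      ∀ S : Finset (Fin n), ∀ᵐ y ∂(Measure.pi fun _ : Fin n => μ),
        F S y = ∑ T ∈ S.powerset, (-1 : ℂ) ^ (S.card - T.card) *
          ∫ x, f (fun i => if i ∈ T then y i else x i)
            ∂(Measure.pi fun _ : Fin n => μ)) := by
  classical
  have hint : Integrable f (Measure.pi fun _ : Fin n => μ) := hf.integrable one_le_two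
  constructor
  · -- existence
    refine ⟨fun S y => ∑ T ∈ S.powerset, (-1 : ℂ) ^ (S.card - T.card) * Ef μ T f y,
      ?_, ?_, ?_, ?_⟩
    · intro S
      exact memLp_finset_sum S.powerset fun T _ => (Ef_memLp hf T).const_mul _
    · intro S x y hxy
      refine Finset.sum_congr rfl fun T hT => ?_
      rw [Finset.mem_powerset] at hT
      rw [Ef_coords T f (fun i hi => hxy i (hT hi))]
    · intro S i hiS
      have hA : ∀ᵐ x ∂(Measure.pi fun _ : Fin n => μ), ∀ T ∈ S.powerset, i ∈ T →
          (Integrable (fun t => Ef μ T f (Function.update x i t)) μ ∧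
            ∫ t, Ef μ T f (Function.update x i t) ∂μ = Ef μ (T.erase i) f x) := by
        rw [Finset.eventually_all]
        intro T _
        by_cases hiT : i ∈ T
        · filter_upwards [Ef_update hint hiT] with x hx _ using hx
        · filter_upwards with x hc
          exact absurd hc hiT
      filter_upwards [hA] with x hx
      have hterm : ∀ T ∈ S.powerset, Integrable
          (fun t => (-1 : ℂ) ^ (S.card - T.card) * Ef μ T f (Function.update x i t)) μ := by
        intro T hT
        by_cases hiT : i ∈ T
        · exact ((hx T hT hiT).1).const_mul _
        · have he : (fun t => (-1 : ℂ) ^ (S.card - T.card) * Ef μ T f (Function.update x i t))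
              = fun _ => (-1 : ℂ) ^ (S.card - T.card) * Ef μ T f x :=
            funext fun t => by rw [Ef_update_not_mem hiT]
          rw [he]
          exact integrable_const _
      rw [integral_finset_sum _ hterm]
      have hval : ∀ T ∈ S.powerset,
          ∫ t, (-1 : ℂ) ^ (S.card - T.card) * Ef μ T f (Function.update x i t) ∂μ
          = (-1 : ℂ) ^ (S.card - T.card) *
            (if i ∈ T then Ef μ (T.erase i) f x else Ef μ T f x) := by
        intro T hT
        rw [integral_const_mul]
        by_cases hiT : i ∈ T
        · rw [if_pos hiT, (hx T hT hiT).2]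
        · rw [if_neg hiT]
          congr 1
          have he : (fun t => Ef μ T f (Function.update x i t)) = fun _ => Ef μ T f x :=
            funext fun t => Ef_update_not_mem hiT x t
          rw [he, integral_const, probReal_univ]
          simp
      rw [Finset.sum_congr rfl hval]
      have hiS' : i ∉ S.erase i := Finset.notMem_erase i S
      rw [show S.powerset = (insert i (S.erase i)).powerset by rw [Finset.insert_erase hiS],
        Finset.sum_powerset_insert hiS', ← Finset.sum_add_distrib]
      refine Finset.sum_eq_zero fun T hT => ?_
      rw [Finset.mem_powerset] at hT
      have hiT : i ∉ T := fun h => hiS' (hT h)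
      rw [if_neg hiT, if_pos (Finset.mem_insert_self i T), Finset.erase_insert hiT,
        Finset.card_insert_of_notMem hiT]
      have hle : T.card + 1 ≤ S.card := by
        have h2 := Finset.card_le_card hT
        have h3 : (S.erase i).card = S.card - 1 := Finset.card_erase_of_mem hiS
        have h4 : 1 ≤ S.card := Finset.card_pos.mpr ⟨i, hiS⟩
        omega
      have hpow : (-1 : ℂ) ^ (S.card - T.card) = -(-1 : ℂ) ^ (S.card - (T.card + 1)) := by
        have he : S.card - T.card = (S.card - (T.card + 1)) + 1 := by omega
        rw [he, pow_succ]
        ring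
      rw [hpow]
      ring
    · refine Filter.Eventually.of_forall fun y => ?_
      have h1 : f y = Ef μ Finset.univ f y := (Ef_univ f y).symm
      rw [h1, show (Finset.univ : Finset (Finset (Fin n)))
          = (Finset.univ : Finset (Fin n)).powerset from Finset.powerset_univ.symm,
        powerset_double_sum Finset.univ (fun S T => (-1 : ℂ) ^ (S.card - T.card) * Ef μ T f y)]
      have h2 : ∀ T ∈ (Finset.univ : Finset (Fin n)).powerset,
          ∑ S ∈ Finset.univ.powerset.filter (fun S => T ⊆ S),
            (-1 : ℂ) ^ (S.card - T.card) * Ef μ T f y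
          = if T = Finset.univ then Ef μ T f y else 0 := by
        intro T _
        rw [← Finset.sum_mul, sum_sign_sub (Finset.subset_univ T)]
        by_cases h : T = Finset.univ <;> simp [h]
      rw [Finset.sum_congr rfl h2, Finset.sum_ite_eq' _ (Finset.univ : Finset (Fin n))
        (fun T => Ef μ T f y)]
      simp
  · -- uniqueness
    intro F hFL2 hFcoord hFkill hFsum S
    have hFint : ∀ S', Integrable (F S') (Measure.pi fun _ : Fin n => μ) :=
      fun S' => (hFL2 S').integrable one_le_two
    have step1 : ∀ T : Finset (Fin n), ∀ᵐ y ∂(Measure.pi fun _ : Fin n => μ),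
        Ef μ T f y = ∑ S' ∈ Finset.univ.filter (fun S' => S' ⊆ T), F S' y := by
      intro T
      have e1 : Ef μ T f =ᵐ[Measure.pi fun _ : Fin n => μ]
          Ef μ T (fun v => ∑ S' : Finset (Fin n), F S' v) := Ef_congr_ae hFsum T
      have e2 := Ef_sum (s := Finset.univ) (fun S' _ => hFint S') T
      have e3 : ∀ᵐ y ∂(Measure.pi fun _ : Fin n => μ), ∀ S' ∈ (Finset.univ : Finset (Finset (Fin n))),
          Ef μ T (F S') y = if S' ⊆ T then F S' y else 0 := by
        rw [Finset.eventually_all]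
        intro S' _
        by_cases hsub : S' ⊆ T
        · refine Filter.Eventually.of_forall fun y => ?_
          rw [Ef_const (hFcoord S') hsub, if_pos hsub]
        · obtain ⟨i, hiS', hiT⟩ := Finset.not_subset.mp hsub
          filter_upwards [Ef_zero (hFint S') hiT (hFkill S' i hiS')] with y hy
          rw [hy, if_neg hsub]
      filter_upwards [e1, e2, e3] with y h1 h2 h3
      rw [h1, h2, Finset.sum_congr rfl (fun S' hS' => h3 S' hS')]
      exact (Finset.sum_filter _ _).symm
    have hall : ∀ᵐ y ∂(Measure.pi fun _ : Fin n => μ), ∀ T ∈ S.powerset,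
        Ef μ T f y = ∑ S' ∈ Finset.univ.filter (fun S' => S' ⊆ T), F S' y := by
      rw [Finset.eventually_all]
      intro T _
      exact step1 T
    filter_upwards [hall] with y hy
    have hrhs : ∑ T ∈ S.powerset, (-1 : ℂ) ^ (S.card - T.card) *
        (∫ x, f (fun i => if i ∈ T then y i else x i) ∂(Measure.pi fun _ : Fin n => μ))
        = ∑ T ∈ S.powerset, (-1 : ℂ) ^ (S.card - T.card) *
          ∑ S' ∈ Finset.univ.filter (fun S' => S' ⊆ T), F S' y :=
      Finset.sum_congr rfl fun T hT => by
        rw [show (∫ x, f (fun i => if i ∈ T then y i else x i)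
          ∂(Measure.pi fun _ : Fin n => μ)) = Ef μ T f y from rfl, hy T hT]
    rw [hrhs]
    have hps : ∀ T : Finset (Fin n),
        Finset.univ.filter (fun S' => S' ⊆ T) = T.powerset := by
      intro T
      ext S'
      simp [Finset.mem_powerset]
    simp_rw [hps, Finset.mul_sum]
    rw [powerset_double_sum S (fun T S' => (-1 : ℂ) ^ (S.card - T.card) * F S' y)]
    have h4 : ∀ S' ∈ S.powerset, ∑ T ∈ S.powerset.filter (fun T => S' ⊆ T),
        (-1 : ℂ) ^ (S.card - T.card) * F S' y = (if S' = S then 1 else 0) * F S' y := by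
      intro S' hS'
      rw [← Finset.sum_mul, sum_sign_sub' (Finset.mem_powerset.mp hS')]
    rw [Finset.sum_congr rfl h4]
    simp [ite_mul, Finset.sum_ite_eq']
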